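/- For a weakly-formed seed with P threads built on a well-formed seed with P−1 threads, all gaps satisfy g_n^{(f)} ≤ g̃_n^{(f)}, where g̃ denotes the gaps of the (P−1)-thread well-formed seed; in particular all f-th order gaps of the extended seed are < 1. -/
import Mathlib


/-- First-order gaps of a seed `s` with `P` threads, parameters `q`, `r`, `f`. -/
noncomputable def gap1 (P q f : ℕ) (r : ℝ) (s : ℕ → ℝ) (n : ℕ) : ℝ :=
  if n = 0 then s 0 + (q : ℝ) + r + (f : ℝ) - s (P - 1) else s n - s (n - 1) - 1

/-- `k`-th order gap: the cyclic sum of `k` consecutive first-order gaps ending at `n`. -/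
noncomputable def gapk (P q f : ℕ) (r : ℝ) (s : ℕ → ℝ) (n k : ℕ) : ℝ :=
  ∑ j ∈ Finset.range k, gap1 P q f r s ((n + k * P - k + 1 + j) % P)

/-- The starting index of the `k`-window, reduced modulo `P`. -/
lemma idx_eq (P n k : ℕ) (hP : 0 < P) (hk : k ≤ P) (hn : n < P) :
    (n + k * P - k) % P = if k ≤ n then n - k else P + n - k := by
  rcases le_or_gt k n with h | h
  · have ht : k ≤ k * P := Nat.le_mul_of_pos_right k hP
    have h1 : n + k * P - k = (n - k) + k * P := by omega
    rw [h1, Nat.add_mul_mod_self_right, Nat.mod_eq_of_lt (by omega), if_pos h]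
  · have hk0 : 0 < k := by omega
    have h2 : (k - 1) * P = k * P - P := Nat.sub_one_mul k P
    have h3 : P ≤ k * P := Nat.le_mul_of_pos_left P hk0
    have h1 : n + k * P - k = (P + n - k) + (k - 1) * P := by omega
    rw [h1, Nat.add_mul_mod_self_right, Nat.mod_eq_of_lt (by omega), if_neg (by omega)]

/-- Closed (telescoped) form for the `k`-th order gap. -/
lemma gapk_closed (P q f : ℕ) (r : ℝ) (s : ℕ → ℝ) (hP : 0 < P) (n : ℕ) (hn : n < P) :
    ∀ k, k ≤ P → gapk P q f r s n k =
      s n - s ((n + k * P - k) % P) - (k : ℝ) +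
        (if n < k then (q : ℝ) + r + (f : ℝ) + 1 else 0) := by
  intro k
  induction k with
  | zero => intro _; simp [gapk, Nat.mod_eq_of_lt hn]
  | succ k ih =>
    intro hk
    have hk' : k ≤ P := Nat.le_of_succ_le hk
    have hkP : k ≤ k * P := Nat.le_mul_of_pos_right k hP
    have h2 : (k + 1) * P = k * P + P := by ring
    have hpeel : gapk P q f r s n (k + 1)
        = gap1 P q f r s ((n + k * P - k) % P) + gapk P q f r s n k := by
      unfold gapk
      rw [Finset.sum_range_succ', add_comm]
      congr 1
      · have h3 : n + (k+1) * P - (k+1) + 1 + 0 = (n + k * P - k) + P := by omega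
        rw [h3, Nat.add_mod_right]
      · refine Finset.sum_congr rfl fun j _ => ?_
        have h3 : n + (k+1) * P - (k+1) + 1 + (j+1) = (n + k * P - k + 1 + j) + P := by omega
        rw [h3, Nat.add_mod_right]
    rw [hpeel, ih hk']
    rw [idx_eq P n k hP hk' hn, idx_eq P n (k+1) hP hk hn]
    rcases le_or_gt k n with h | h
    · rw [if_pos h, if_neg (not_lt.mpr h)]
      rcases eq_or_lt_of_le h with he | hlt
      · -- `k = n`: the window now reaches index `0`, i.e. the wrap-around gap.
        rw [← he, Nat.sub_self, if_neg (by omega), if_pos (by omega)]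
        have h4 : P + k - (k + 1) = P - 1 := by omega
        rw [h4]
        simp [gap1]
        ring
      · -- `k < n`: an ordinary interior gap is added.
        rw [if_pos (by omega), if_neg (by omega)]
        have hne : n - k ≠ 0 := by omega
        rw [gap1, if_neg hne]
        have h4 : n - k - 1 = n - (k + 1) := by omega
        rw [h4]
        push_cast
        ring
    · -- `n < k`: the window has already wrapped around.
      rw [if_neg (not_le.mpr h), if_pos h, if_neg (by omega), if_pos (by omega)]
      have hne : P + n - k ≠ 0 := by omega
      rw [gap1, if_neg hne]
      have h4 : P + n - k - 1 = P + n - (k + 1) := by omega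
      rw [h4]
      push_cast
      ring

/-- Weakly-formed seed: inserting a new thread (success time `s (P-1)`) into a
well-formed seed with `P-1` threads splits the old wrap-around gap into two
nonnegative parts; then every `k`-th order gap of the extended `P`-thread seed is
at most the corresponding `k`-th order gap of the `P-1`-thread seed, and in
particular all `f`-th order gaps of the extended seed are `< 1`. -/
theorem weakly_formed_seed_gaps_le
    (P q f : ℕ) (r : ℝ) (s : ℕ → ℝ)
    (hP : 3 ≤ P) (hr0 : 0 ≤ r) (hr1 : r < 1) (hf : f ≤ P - 1)
    (hmono : StrictMonoOn s (Set.Iio P))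
    (hins : s (P - 2) + 1 < s (P - 1))
    (hsplit : 0 ≤ gap1 P q f r s (P - 1) ∧ 0 ≤ gap1 P q f r s 0)
    (hwf : ∀ n < P - 1, 0 ≤ gapk (P - 1) q f r s n f ∧ gapk (P - 1) q f r s n f < 1) :
    (∀ n < P, ∀ k ≤ P - 1,
      gapk P q f r s n k ≤ gapk (P - 1) q f r s (n % (P - 1)) k) ∧
    (∀ n < P, gapk P q f r s n f < 1) := by
  have hP1 : 0 < P - 1 := by omega
  have hP0 : 0 < P := by omega
  have key : ∀ n < P, ∀ k ≤ P - 1,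
      gapk P q f r s n k ≤ gapk (P - 1) q f r s (n % (P - 1)) k := by
    intro n hn k hk
    have hm : n % (P - 1) < P - 1 := Nat.mod_lt _ hP1
    rw [gapk_closed P q f r s hP0 n hn k (by omega),
      gapk_closed (P - 1) q f r s hP1 (n % (P - 1)) hm k hk]
    rcases lt_or_ge n (P - 1) with hn1 | hn1
    · have hm' : n % (P - 1) = n := Nat.mod_eq_of_lt hn1
      rw [hm', idx_eq P n k hP0 (by omega) hn, idx_eq (P - 1) n k hP1 hk hn1]
      rcases le_or_gt k n with h | h
      · rw [if_pos h, if_pos h]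
      · rw [if_neg (not_le.mpr h), if_neg (not_le.mpr h)]
        have hlt : P - 1 + n - k < P + n - k := by omega
        have hs := hmono (Set.mem_Iio.mpr (show P - 1 + n - k < P by omega))
          (Set.mem_Iio.mpr (show P + n - k < P by omega)) hlt
        linarith
    · have hnP : n = P - 1 := by omega
      subst hnP
      have hm' : (P - 1) % (P - 1) = 0 := Nat.mod_self _
      rw [hm', idx_eq P (P - 1) k hP0 (by omega) hn, idx_eq (P - 1) 0 k hP1 hk hP1]
      rcases Nat.eq_zero_or_pos k with rfl | hk0
      · simp
      · rw [if_pos (show k ≤ P - 1 from hk), if_neg (by omega),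
          if_neg (by omega), if_pos hk0]
        have hB : P - 1 + 0 - k = P - 1 - k := by omega
        rw [hB]
        have h0 := hsplit.2
        rw [gap1, if_pos rfl] at h0
        linarith
  refine ⟨key, fun n hn => ?_⟩
  have h1 := key n hn f hf
  have h2 := (hwf (n % (P - 1)) (Nat.mod_lt _ hP1)).2
  linarith
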